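/- Let a > 0 and let f : (0, ∞) → ℝ be differentiable such that r ↦ r⁴ · f'(r) is nondecreasing with limit 3a³ as r → ∞, and such that f(r) → 1 as r → ∞. Then f(r) ≥ 1 - a³/r³ for every r > 0. -/

import Mathlib

theorem stmt_1 (a : ℝ) (ha : 0 < a) (f f' : ℝ → ℝ)
    (hderiv : ∀ r ∈ Set.Ioi (0:ℝ), HasDerivAt f (f' r) r)
    (hmono : MonotoneOn (fun r => r ^ 4 * f' r) (Set.Ioi (0:ℝ)))
    (hlim : Filter.Tendsto (fun r => r ^ 4 * f' r) Filter.atTop (nhds (3 * a ^ 3)))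
    (hf1 : Filter.Tendsto f Filter.atTop (nhds 1)) :
    ∀ r ∈ Set.Ioi (0:ℝ), 1 - a ^ 3 / r ^ 3 ≤ f r := by
  -- key bound: for s > 0, s^4 * f' s ≤ 3 * a^3
  have hbound : ∀ s ∈ Set.Ioi (0:ℝ), s ^ 4 * f' s ≤ 3 * a ^ 3 := by
    intro s hs
    refine ge_of_tendsto hlim ?_
    filter_upwards [Filter.eventually_ge_atTop s, Filter.eventually_gt_atTop (0:ℝ)]
      with t hts ht
    exact hmono hs ht hts
  set h : ℝ → ℝ := fun r => f r + a ^ 3 * (r ^ 3)⁻¹ with hh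
  have hderivh : ∀ r ∈ Set.Ioi (0:ℝ),
      HasDerivAt h (f' r + a ^ 3 * (-(3 * r ^ 2) / (r ^ 3) ^ 2)) r := by
    intro r hr
    have hr0 : (r:ℝ) ≠ 0 := ne_of_gt hr
    have h1 : HasDerivAt (fun r : ℝ => (r ^ 3)⁻¹) (-(3 * r ^ 2) / (r ^ 3) ^ 2) r := by
      have := (hasDerivAt_pow 3 r).inv (pow_ne_zero 3 hr0)
      simp at this
      exact this
    exact (hderiv r hr).add (h1.const_mul (a ^ 3))
  have hanti : AntitoneOn h (Set.Ioi (0:ℝ)) := by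
    apply antitoneOn_of_deriv_nonpos (convex_Ioi 0)
    · exact fun r hr => ((hderivh r hr).continuousAt).continuousWithinAt
    · intro r hr
      rw [interior_Ioi] at hr
      exact ((hderivh r hr).differentiableAt).differentiableWithinAt
    · intro r hr
      rw [interior_Ioi] at hr
      rw [(hderivh r hr).deriv]
      have hr0 : (0:ℝ) < r := hr
      have hkey := hbound r hr
      have h4 : (0:ℝ) < r ^ 4 := by positivity
      have : f' r ≤ 3 * a ^ 3 / r ^ 4 := by
        rw [le_div_iff₀ h4]
        linarith [hkey]
      have heq : a ^ 3 * (-(3 * r ^ 2) / (r ^ 3) ^ 2) = -(3 * a ^ 3 / r ^ 4) := by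
        field_simp
      rw [heq]
      linarith
  have hlimh : Filter.Tendsto h Filter.atTop (nhds 1) := by
    have h0 : Filter.Tendsto (fun r : ℝ => a ^ 3 * (r ^ 3)⁻¹) Filter.atTop (nhds 0) := by
      have hp : Filter.Tendsto (fun r : ℝ => r ^ 3) Filter.atTop Filter.atTop :=
        Filter.tendsto_pow_atTop (by norm_num)
      have hi : Filter.Tendsto (fun r : ℝ => (r ^ 3)⁻¹) Filter.atTop (nhds 0) :=
        hp.inv_tendsto_atTop
      have := hi.const_mul (a ^ 3)
      simpa using this
    simpa using hf1.add h0
  intro r hr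
  have hr0 : (0:ℝ) < r := hr
  have h1le : (1:ℝ) ≤ h r := by
    refine le_of_tendsto hlimh ?_
    filter_upwards [Filter.eventually_ge_atTop r] with t htr
    exact hanti hr (lt_of_lt_of_le hr0 htr) htr
  have : 1 - a ^ 3 * (r ^ 3)⁻¹ ≤ f r := by simpa [hh] using h1le
  simpa [div_eq_mul_inv] using this
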